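/- Let r ≥ 1, let U ⊆ ℂ be open, let z ∈ U, let θ : U → M_r(ℂ) be twice differentiable at z with θ invertible in a neighborhood of z, and let A : U → M_r(ℂ) be differentiable at z. Define the matrix-valued function A₁ := θ⁻¹Aθ + θ⁻¹θ′ near z, where ′ denotes the entrywise derivative. Then at z: (1/2)·Tr(A₁′) + (1/2)·Tr(A₁·A₁) = (1/2)·Tr(A′) + (1/2)·Tr(A·A) + Tr(θ⁻¹·A·θ′) + (1/2)·Tr(θ⁻¹·θ″). -/

import Mathlib

open Matrix

/-- Entrywise derivative of a matrix-valued function of one complex variable. -/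
noncomputable def mderiv {r : ℕ} (f : ℂ → Matrix (Fin r) (Fin r) ℂ) (z : ℂ) :
    Matrix (Fin r) (Fin r) ℂ :=
  Matrix.of fun i j => deriv (fun w => f w i j) z

/-- Entrywise differentiability of a matrix-valued function at a point. -/
def MatDifferentiableAt {r : ℕ} (f : ℂ → Matrix (Fin r) (Fin r) ℂ) (z : ℂ) : Prop :=
  ∀ i j, DifferentiableAt ℂ (fun w => f w i j) z

section aux
variable {r : ℕ} {f g : ℂ → Matrix (Fin r) (Fin r) ℂ} {z : ℂ}

lemma matdiff_mul (hf : MatDifferentiableAt f z) (hg : MatDifferentiableAt g z) :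
    MatDifferentiableAt (fun w => f w * g w) z := by
  intro i j
  have : (fun w => (f w * g w) i j) = fun w => ∑ k, f w i k * g w k j := by
    funext w; simp [Matrix.mul_apply]
  rw [this]
  exact DifferentiableAt.fun_sum fun k _ => (hf i k).mul (hg k j)

lemma mderiv_mul (hf : MatDifferentiableAt f z) (hg : MatDifferentiableAt g z) :
    mderiv (fun w => f w * g w) z = mderiv f z * g z + f z * mderiv g z := by
  ext i j
  have h1 : (fun w => (f w * g w) i j) = fun w => ∑ k, f w i k * g w k j := by
    funext w; simp [Matrix.mul_apply]
  simp only [mderiv, Matrix.of_apply, Matrix.add_apply, Matrix.mul_apply, h1]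
  rw [deriv_fun_sum (fun k _ => ((hf i k).fun_mul (hg k j))), ← Finset.sum_add_distrib]
  refine Finset.sum_congr rfl fun k _ => ?_
  rw [deriv_fun_mul (hf i k) (hg k j)]

lemma matdiff_add (hf : MatDifferentiableAt f z) (hg : MatDifferentiableAt g z) :
    MatDifferentiableAt (fun w => f w + g w) z := by
  intro i j
  exact ((hf i j).add (hg i j) : DifferentiableAt ℂ (fun w => f w i j + g w i j) z)

lemma mderiv_add (hf : MatDifferentiableAt f z) (hg : MatDifferentiableAt g z) :
    mderiv (fun w => f w + g w) z = mderiv f z + mderiv g z := by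
  ext i j
  exact deriv_add (hf i j) (hg i j)

lemma mderiv_congr (h : f =ᶠ[nhds z] g) : mderiv f z = mderiv g z := by
  ext i j
  exact Filter.EventuallyEq.deriv_eq (h.mono fun w hw => congrFun (congrFun hw i) j)

lemma matdiff_det (hf : MatDifferentiableAt f z) :
    DifferentiableAt ℂ (fun w => (f w).det) z := by
  have : (fun w => (f w).det)
      = fun w => ∑ σ : Equiv.Perm (Fin r), (Equiv.Perm.sign σ : ℂ) * ∏ i, f w (σ i) i := by
    funext w; rw [Matrix.det_apply']
  rw [this]
  exact DifferentiableAt.fun_sum fun σ _ =>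
    (DifferentiableAt.fun_finsetProd fun i _ => hf (σ i) i).const_mul _

lemma matdiff_adjugate (hf : MatDifferentiableAt f z) :
    MatDifferentiableAt (fun w => (f w).adjugate) z := by
  intro i j
  have : (fun w => (f w).adjugate i j)
      = fun w => ((f w).updateRow j (Pi.single i 1)).det := by
    funext w; rw [Matrix.adjugate_apply]
  rw [this]
  apply matdiff_det
  intro a b
  by_cases hab : a = j
  · subst hab; simp only [Matrix.updateRow_self]
    exact differentiableAt_const _
  · simp only [Matrix.updateRow_ne hab]
    exact hf a b

lemma matdiff_inv (hf : MatDifferentiableAt f z) (hdet : (f z).det ≠ 0) :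
    MatDifferentiableAt (fun w => (f w)⁻¹) z := by
  intro i j
  have : (fun w => (f w)⁻¹ i j) = fun w => ((f w).det)⁻¹ * (f w).adjugate i j := by
    funext w
    rw [Matrix.inv_def, Ring.inverse_eq_inv]
    simp [Matrix.smul_apply, smul_eq_mul]
  rw [this]
  exact ((matdiff_det hf).inv hdet).mul (matdiff_adjugate hf i j)

end aux

/-- the local data (A df, ½Tr(dA ⊗ df) + ½Tr(A df ⊗ A df)) of the
extended connection ∇_Ex transform by the extended-connection rule:
with A₁ := θ⁻¹Aθ + θ⁻¹θ′ one has, at z,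
½Tr(A₁′) + ½Tr(A₁A₁) = ½Tr(A′) + ½Tr(AA) + Tr(θ⁻¹Aθ′) + ½Tr(θ⁻¹θ″). -/
theorem stmt3 (r : ℕ) (hr : 1 ≤ r) (U : Set ℂ) (hU : IsOpen U) (z : ℂ) (hz : z ∈ U)
    (θ A : ℂ → Matrix (Fin r) (Fin r) ℂ)
    (hθ : ∀ w ∈ U, MatDifferentiableAt θ w)
    (hθ' : MatDifferentiableAt (fun w => mderiv θ w) z)
    (hinv : ∀ᶠ w in nhds z, IsUnit (θ w))
    (hA : MatDifferentiableAt A z)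
    (A₁ : ℂ → Matrix (Fin r) (Fin r) ℂ)
    (hA₁ : ∀ w, A₁ w = (θ w)⁻¹ * A w * θ w + (θ w)⁻¹ * mderiv θ w) :
    (1 / 2 : ℂ) * trace (mderiv A₁ z) + (1 / 2 : ℂ) * trace (A₁ z * A₁ z)
      = (1 / 2 : ℂ) * trace (mderiv A z) + (1 / 2 : ℂ) * trace (A z * A z)
          + trace ((θ z)⁻¹ * A z * mderiv θ z)
          + (1 / 2 : ℂ) * trace ((θ z)⁻¹ * mderiv (fun w => mderiv θ w) z) := by
  have hθz : MatDifferentiableAt θ z := hθ z hz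
  have hUz : IsUnit (θ z) := hinv.self_of_nhds
  have hdetU : IsUnit (θ z).det := (Matrix.isUnit_iff_isUnit_det _).mp hUz
  have hdet : (θ z).det ≠ 0 := hdetU.ne_zero
  have hB : MatDifferentiableAt (fun w => (θ w)⁻¹) z := matdiff_inv hθz hdet
  set B := (θ z)⁻¹ with hBdef
  set T := θ z with hTdef
  set P := mderiv θ z with hPdef
  set Q := mderiv (fun w => mderiv θ w) z with hQdef
  set Az := A z with hAzdef
  set A' := mderiv A z with hA'def
  have hBT : B * T = 1 := Matrix.nonsing_inv_mul _ hdetU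
  have hTB : T * B = 1 := Matrix.mul_nonsing_inv _ hdetU
  -- derivative of the inverse
  have hBTfun : (fun w => (θ w)⁻¹ * θ w) =ᶠ[nhds z] fun _ => (1 : Matrix (Fin r) (Fin r) ℂ) := by
    filter_upwards [hinv] with w hw
    exact Matrix.nonsing_inv_mul _ ((Matrix.isUnit_iff_isUnit_det _).mp hw)
  have hconst : mderiv (fun _ : ℂ => (1 : Matrix (Fin r) (Fin r) ℂ)) z = 0 := by
    ext i j; simp [mderiv]
  have hder0 : mderiv (fun w => (θ w)⁻¹) z * T + B * P = 0 := by
    rw [← mderiv_mul hB hθz, mderiv_congr hBTfun, hconst]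
  have hB' : mderiv (fun w => (θ w)⁻¹) z = -(B * P * B) := by
    have h1 : mderiv (fun w => (θ w)⁻¹) z * T = -(B * P) := by
      rw [eq_neg_iff_add_eq_zero]; exact hder0
    calc mderiv (fun w => (θ w)⁻¹) z
        = mderiv (fun w => (θ w)⁻¹) z * (T * B) := by rw [hTB, mul_one]
      _ = (mderiv (fun w => (θ w)⁻¹) z * T) * B := by rw [mul_assoc]
      _ = -(B * P * B) := by rw [h1]; noncomm_ring
  -- derivative of A₁
  have hBA : MatDifferentiableAt (fun w => (θ w)⁻¹ * A w) z := matdiff_mul hB hA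
  have hBAθ : MatDifferentiableAt (fun w => (θ w)⁻¹ * A w * θ w) z :=
    matdiff_mul hBA hθz
  have hBθ' : MatDifferentiableAt (fun w => (θ w)⁻¹ * mderiv θ w) z := matdiff_mul hB hθ'
  have hA₁eq : A₁ = fun w => (θ w)⁻¹ * A w * θ w + (θ w)⁻¹ * mderiv θ w := funext hA₁
  have hmd : mderiv A₁ z
      = -(B * P * B * Az * T) + B * A' * T + B * Az * P + -(B * P * (B * P)) + B * Q := by
    rw [hA₁eq, mderiv_add hBAθ hBθ', mderiv_mul hBA hθz, mderiv_mul hB hA,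
      mderiv_mul hB hθ', hB']
    noncomm_ring
  have hA₁z : A₁ z = B * Az * T + B * P := hA₁ z
  -- trace identities
  have e1 : trace (B * A' * T) = trace A' := by
    rw [Matrix.trace_mul_comm (B * A') T, ← mul_assoc, hTB, one_mul]
  have e2 : trace (B * P * B * Az * T) = trace (B * Az * P) := by
    rw [Matrix.trace_mul_comm (B * P * B * Az) T,
      show T * (B * P * B * Az) = T * B * (P * (B * Az)) by noncomm_ring, hTB, one_mul,
      Matrix.trace_mul_comm P (B * Az), mul_assoc]
  have e3 : trace (B * Az * T * (B * Az * T)) = trace (Az * Az) := by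
    rw [show B * Az * T * (B * Az * T) = B * (Az * (T * B) * (Az * T)) by noncomm_ring, hTB,
      Matrix.trace_mul_comm B (Az * 1 * (Az * T)),
      show Az * 1 * (Az * T) * B = Az * Az * (T * B) by noncomm_ring, hTB, mul_one]
  have e4 : trace (B * Az * T * (B * P)) = trace (B * Az * P) := by
    rw [show B * Az * T * (B * P) = B * Az * (T * B) * P by noncomm_ring, hTB,
      show B * Az * (1 : Matrix (Fin r) (Fin r) ℂ) * P = B * Az * P by noncomm_ring]
  have e5 : trace (B * P * (B * Az * T)) = trace (B * Az * P) := by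
    rw [Matrix.trace_mul_comm (B * P) (B * Az * T),
      show B * Az * T * (B * P) = B * Az * (T * B) * P by noncomm_ring, hTB,
      show B * Az * (1 : Matrix (Fin r) (Fin r) ℂ) * P = B * Az * P by noncomm_ring]
  have E : trace (mderiv A₁ z)
      = trace A' + trace (B * Q) - trace (B * P * (B * P)) := by
    rw [hmd]
    simp only [Matrix.trace_add, Matrix.trace_neg]
    rw [e1, e2]
    ring
  have F : trace (A₁ z * A₁ z)
      = trace (Az * Az) + 2 * trace (B * Az * P) + trace (B * P * (B * P)) := by
    rw [hA₁z,
      show (B * Az * T + B * P) * (B * Az * T + B * P)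
        = B * Az * T * (B * Az * T) + B * Az * T * (B * P) + B * P * (B * Az * T)
          + B * P * (B * P) by noncomm_ring]
    simp only [Matrix.trace_add]
    rw [e3, e4, e5]
    ring
  rw [E, F]
  ring
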